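/- Let P ⊂ ℝ^n be a reflexive lattice polytope. Then for every positive integer k, kP ∩ ℤ^n = {0} ∪ ⋃_{i=1}^k (∂(iP) ∩ ℤ^n), where ∂ denotes the topological boundary; moreover the sets {0}, ∂P ∩ ℤ^n, ∂(2P) ∩ ℤ^n, …, ∂(kP) ∩ ℤ^n are pairwise disjoint. -/

import Mathlib

open scoped BigOperators
open MeasureTheory Polynomial Filter

noncomputable section

/-- A point of `ℝ^n` is a lattice point if all its coordinates are integers. -/
def isLatticePoint (n : ℕ) (u : Fin n → ℝ) : Prop := ∀ i, ∃ z : ℤ, u i = (z : ℝ)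

/-- The set of lattice points of a subset `S ⊆ ℝ^n`. -/
def latticePts (n : ℕ) (S : Set (Fin n → ℝ)) : Set (Fin n → ℝ) :=
  {u ∈ S | isLatticePoint n u}

/-- The dilation `kS = {k • x : x ∈ S}`. -/
def dilate (n : ℕ) (k : ℕ) (S : Set (Fin n → ℝ)) : Set (Fin n → ℝ) :=
  (fun x => (k : ℝ) • x) '' S

/-- A lattice polytope: the convex hull of a nonempty finite set of lattice points. -/
def IsLatticePolytope (n : ℕ) (P : Set (Fin n → ℝ)) : Prop :=
  ∃ V : Finset (Fin n → ℝ), V.Nonempty ∧ (∀ v ∈ V, isLatticePoint n v) ∧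
    P = convexHull ℝ (V : Set (Fin n → ℝ))

/-- `P` is full-dimensional (`n`-dimensional) iff it has nonempty interior. -/
def IsFullDim (n : ℕ) (P : Set (Fin n → ℝ)) : Prop := (interior P).Nonempty

/-- The `k`-th quantized barycenter
`Bc_k(P) = (1/(k·#(kP ∩ ℤ^n))) · Σ_{u ∈ kP ∩ ℤ^n} u`. -/
def Bck (n k : ℕ) (P : Set (Fin n → ℝ)) : Fin n → ℝ :=
  ((k : ℝ) * ((latticePts n (dilate n k P)).ncard : ℝ))⁻¹ •
    ∑ᶠ u ∈ latticePts n (dilate n k P), u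

/-- The barycenter `Bc(P) = (∫_P x dx)/vol(P)`. -/
def Bc (n : ℕ) (P : Set (Fin n → ℝ)) : Fin n → ℝ :=
  fun i => (∫ x in P, x i) / (volume P).toReal

/-- `P` is reflexive w.r.t. the primitive integer vectors `v 1, …, v d`:
each `v i` has coordinates with gcd `1`, and
`P = ⋂ i {u : ⟨u, v i⟩ ≥ −1}`. -/
def IsReflexive (n d : ℕ) (v : Fin d → Fin n → ℤ) (P : Set (Fin n → ℝ)) : Prop :=
  (∀ i, Finset.univ.gcd (v i) = 1) ∧
    P = ⋂ i, {u : Fin n → ℝ | -1 ≤ ∑ j, u j * (v i j : ℝ)}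

/-- for a reflexive lattice polytope,
`kP ∩ ℤ^n = {0} ∪ ⋃_{i=1}^k (∂(iP) ∩ ℤ^n)`, and the sets
`{0}, ∂P ∩ ℤ^n, …, ∂(kP) ∩ ℤ^n` are pairwise disjoint. -/
theorem reflexive_shell_decomposition
    (n d : ℕ) (v : Fin d → Fin n → ℤ) (P : Set (Fin n → ℝ))
    (hP : IsLatticePolytope n P) (hdim : IsFullDim n P)
    (href : IsReflexive n d v P)
    (k : ℕ) (hk : 0 < k) :
    (latticePts n (dilate n k P)
        = {0} ∪ ⋃ i ∈ Finset.Icc 1 k, latticePts n (frontier (dilate n i P)))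
    ∧ (∀ i ∈ Finset.Icc 1 k, (0 : Fin n → ℝ) ∉ latticePts n (frontier (dilate n i P)))
    ∧ (∀ i ∈ Finset.Icc 1 k, ∀ j ∈ Finset.Icc 1 k, i ≠ j →
        Disjoint (latticePts n (frontier (dilate n i P)))
          (latticePts n (frontier (dilate n j P)))) := by
  classical
  obtain ⟨hprim, hPeq⟩ := href
  obtain ⟨V, hVne, hVlat, hPV⟩ := hP
  set f : Fin d → (Fin n → ℝ) → ℝ := fun j u => ∑ l, u l * (v j l : ℝ) with hfdef
  have hfcont : ∀ j, Continuous (f j) := fun j =>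
    continuous_finset_sum _ fun l _ => (continuous_apply l).mul continuous_const
  have hfsmul : ∀ (j : Fin d) (c : ℝ) (u : Fin n → ℝ), f j (c • u) = c * f j u := by
    intro j c u
    simp only [hfdef, Pi.smul_apply, smul_eq_mul, Finset.mul_sum]
    exact Finset.sum_congr rfl fun l _ => by ring
  have hfsub : ∀ (j : Fin d) (u w : Fin n → ℝ) (c : ℝ),
      f j (u - c • w) = f j u - c * f j w := by
    intro j u w c
    simp only [hfdef, Pi.sub_apply, Pi.smul_apply, smul_eq_mul, Finset.mul_sum,
      ← Finset.sum_sub_distrib]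
    exact Finset.sum_congr rfl fun l _ => by ring
  have hPmem : ∀ u, u ∈ P ↔ ∀ j, -1 ≤ f j u := by
    intro u
    rw [hPeq]
    simp only [Set.mem_iInter, Set.mem_setOf_eq, hfdef]
  have hdil : ∀ i : ℕ, 0 < i → ∀ u, (u ∈ dilate n i P ↔ ∀ j, -(i : ℝ) ≤ f j u) := by
    intro i hi u
    have hipos : (0 : ℝ) < i := by exact_mod_cast hi
    constructor
    · rintro ⟨x, hx, rfl⟩ j
      rw [hfsmul]
      have h1 := (hPmem x).1 hx j
      nlinarith
    · intro h
      refine ⟨(i : ℝ)⁻¹ • u, ?_, ?_⟩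
      · rw [hPmem]
        intro j
        rw [hfsmul]
        have h1 : (0 : ℝ) < (i : ℝ)⁻¹ := by positivity
        have h2 : (i : ℝ) * (i : ℝ)⁻¹ = 1 := mul_inv_cancel₀ hipos.ne'
        nlinarith [mul_le_mul_of_nonneg_left (h j) h1.le]
      · show (i : ℝ) • ((i : ℝ)⁻¹ • u) = u
        rw [smul_smul, mul_inv_cancel₀ hipos.ne', one_smul]
  have hclosed : ∀ i : ℕ, 0 < i → IsClosed (dilate n i P) := by
    intro i hi
    have : dilate n i P = ⋂ j, {u | -(i : ℝ) ≤ f j u} := by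
      ext u; rw [hdil i hi u]; simp [Set.mem_iInter]
    rw [this]
    exact isClosed_iInter fun j => isClosed_le continuous_const (hfcont j)
  have hvsq : ∀ j, (0 : ℝ) < ∑ l, ((v j l : ℝ)) ^ 2 := by
    intro j
    have hne : v j ≠ 0 := by
      intro h
      have := hprim j
      rw [h] at this
      have h0 : Finset.univ.gcd (0 : Fin n → ℤ) = 0 :=
        Finset.gcd_eq_zero_iff.2 (fun x _ => rfl)
      rw [h0] at this
      exact zero_ne_one this
    obtain ⟨l, hl⟩ := Function.ne_iff.1 hne
    refine Finset.sum_pos' (fun l _ => sq_nonneg _) ⟨l, Finset.mem_univ l, ?_⟩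
    have : ((v j l : ℝ)) ≠ 0 := Int.cast_ne_zero.2 hl
    exact sq_pos_iff.2 this
  have hint : ∀ i : ℕ, 0 < i →
      interior (dilate n i P) = ⋂ j, {u | -(i : ℝ) < f j u} := by
    intro i hi
    apply Set.Subset.antisymm
    · intro u hu
      rw [Set.mem_iInter]
      intro j
      by_contra hle
      rw [Set.mem_setOf_eq, not_lt] at hle
      obtain ⟨ε, hε, hball⟩ := Metric.isOpen_iff.1 isOpen_interior u hu
      set w : Fin n → ℝ := fun l => (v j l : ℝ) with hwdef
      have hwval : f j w = ∑ l, ((v j l : ℝ)) ^ 2 := by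
        simp only [hfdef, hwdef, sq]
      set δ : ℝ := ε / (2 * (‖w‖ + 1)) with hδdef
      have hw0 : (0 : ℝ) ≤ ‖w‖ := norm_nonneg w
      have hδ : 0 < δ := by positivity
      have hmem : u - δ • w ∈ Metric.ball u ε := by
        rw [Metric.mem_ball, dist_eq_norm]
        have h1 : u - δ • w - u = -(δ • w) := by abel
        rw [h1, norm_neg, norm_smul, Real.norm_of_nonneg hδ.le, hδdef,
          div_mul_eq_mul_div, div_lt_iff₀ (by positivity)]
        nlinarith
      have h2 : u - δ • w ∈ dilate n i P := interior_subset (hball hmem)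
      have h3 := (hdil i hi _).1 h2 j
      rw [hfsub, hwval] at h3
      nlinarith [mul_pos hδ (hvsq j)]
    · refine interior_maximal ?_
        (isOpen_iInter_of_finite fun j => isOpen_lt continuous_const (hfcont j))
      intro u hu
      exact (hdil i hi u).2 fun j => le_of_lt (Set.mem_iInter.1 hu j)
  have hPbdd : ∃ R : ℝ, ∀ x ∈ P, ‖x‖ ≤ R := by
    have hc : IsCompact P := by
      rw [hPV]
      exact V.finite_toSet.isCompact_convexHull (𝕜 := ℝ)
    exact isBounded_iff_forall_norm_le.1 hc.isBounded
  have hzero : ∀ u : Fin n → ℝ, (∀ j, 0 ≤ f j u) → u = 0 := by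
    intro u hu
    by_contra hne
    obtain ⟨R, hR⟩ := hPbdd
    have hnu : 0 < ‖u‖ := norm_pos_iff.2 hne
    set t : ℝ := (|R| + 1) / ‖u‖ with htdef
    have ht : 0 ≤ t := by positivity
    have htu : t • u ∈ P := by
      rw [hPmem]
      intro j
      rw [hfsmul]
      nlinarith [mul_nonneg ht (hu j)]
    have h1 := hR _ htu
    rw [norm_smul, Real.norm_of_nonneg ht, htdef, div_mul_cancel₀ _ hnu.ne'] at h1
    have h2 := le_abs_self R
    linarith
  have hlatf : ∀ u, isLatticePoint n u → ∀ j, ∃ m : ℤ, f j u = (m : ℝ) := by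
    intro u hu j
    choose z hz using hu
    refine ⟨∑ l, z l * v j l, ?_⟩
    simp only [hfdef]
    push_cast
    exact Finset.sum_congr rfl fun l _ => by rw [hz l]
  have hmono : ∀ i i' : ℕ, 0 < i → i ≤ i' → dilate n i P ⊆ dilate n i' P := by
    intro i i' hi hii u hu
    have hi' : 0 < i' := lt_of_lt_of_le hi hii
    rw [hdil i' hi' u]
    intro j
    have h1 := (hdil i hi u).1 hu j
    have h2 : (i : ℝ) ≤ i' := by exact_mod_cast hii
    linarith
  have hsub_int : ∀ i i' : ℕ, 0 < i → i < i' →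
      dilate n i P ⊆ interior (dilate n i' P) := by
    intro i i' hi hii u hu
    have hi' : 0 < i' := lt_trans hi hii
    rw [hint i' hi', Set.mem_iInter]
    intro j
    have h1 := (hdil i hi u).1 hu j
    have h2 : (i : ℝ) < i' := by exact_mod_cast hii
    simp only [Set.mem_setOf_eq]
    linarith
  have hfr_sub : ∀ i : ℕ, 0 < i → frontier (dilate n i P) ⊆ dilate n i P := by
    intro i hi
    exact frontier_subset_closure.trans (hclosed i hi).closure_eq.subset
  have h0int : ∀ i : ℕ, 0 < i → (0 : Fin n → ℝ) ∈ interior (dilate n i P) := by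
    intro i hi
    rw [hint i hi, Set.mem_iInter]
    intro j
    have hipos : (0 : ℝ) < i := by exact_mod_cast hi
    have : f j 0 = 0 := by simp [hfdef]
    simp only [Set.mem_setOf_eq, this]
    linarith
  have h0lat : isLatticePoint n (0 : Fin n → ℝ) := fun i => ⟨0, by simp⟩
  refine ⟨?_, ?_, ?_⟩
  · ext u
    constructor
    · rintro ⟨hu, hlat⟩
      by_cases h0 : u = 0
      · exact Or.inl (by simp [h0])
      · right
        have hex : ∃ i : ℕ, 0 < i ∧ u ∈ dilate n i P := ⟨k, hk, hu⟩
        set i0 := Nat.find hex with hi0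
        obtain ⟨hi0pos, hi0mem⟩ := Nat.find_spec hex
        have hi0le : i0 ≤ k := Nat.find_min' hex ⟨hk, hu⟩
        have hnint : u ∉ interior (dilate n i0 P) := by
          intro hIn
          rw [hint i0 hi0pos, Set.mem_iInter] at hIn
          have hstep : ∀ j, -(((i0 - 1 : ℕ) : ℝ)) ≤ f j u := by
            intro j
            obtain ⟨m, hm⟩ := hlatf u hlat j
            have h1 : -((i0 : ℝ)) < (m : ℝ) := by
              rw [← hm]; exact hIn j
            have h2 : -(i0 : ℤ) < m := by exact_mod_cast h1
            have h3 : -((i0 : ℤ) - 1) ≤ m := by omega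
            have h4 : -((i0 : ℝ) - 1) ≤ (m : ℝ) := by exact_mod_cast h3
            rw [hm, Nat.cast_sub hi0pos]
            push_cast
            linarith
          rcases Nat.lt_or_ge i0 2 with hc | hc
          · have heq : i0 = 1 := by omega
            have hz : ∀ j, 0 ≤ f j u := by
              intro j
              have := hstep j
              rw [heq] at this
              norm_num at this
              exact this
            exact h0 (hzero u hz)
          · have hpos : 0 < i0 - 1 := by omega
            have hmem' : u ∈ dilate n (i0 - 1) P := (hdil _ hpos u).2 hstep
            exact Nat.find_min hex (by omega : i0 - 1 < i0) ⟨hpos, hmem'⟩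
        have hfront : u ∈ frontier (dilate n i0 P) := ⟨subset_closure hi0mem, hnint⟩
        refine Set.mem_iUnion₂.2 ⟨i0, ?_, hfront, hlat⟩
        rw [Finset.mem_Icc]
        exact ⟨hi0pos, hi0le⟩
    · rintro (h0 | hmem)
      · rw [Set.mem_singleton_iff] at h0
        subst h0
        exact ⟨interior_subset (h0int k hk), h0lat⟩
      · obtain ⟨i, hi, hui, hlat⟩ := Set.mem_iUnion₂.1 hmem
        rw [Finset.mem_Icc] at hi
        exact ⟨hmono i k hi.1 hi.2 (hfr_sub i hi.1 hui), hlat⟩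
  · intro i hi
    rw [Finset.mem_Icc] at hi
    rintro ⟨hfr, -⟩
    exact hfr.2 (h0int i hi.1)
  · have key : ∀ a b : ℕ, 1 ≤ a → a < b →
        Disjoint (latticePts n (frontier (dilate n a P)))
          (latticePts n (frontier (dilate n b P))) := by
      intro a b ha hab
      rw [Set.disjoint_left]
      rintro u ⟨hua, hlat⟩ ⟨hub, -⟩
      exact hub.2 (hsub_int a b ha hab (hfr_sub a ha hua))
    intro i hi j hj hij
    rw [Finset.mem_Icc] at hi hj
    rcases lt_or_gt_of_ne hij with h | h
    · exact key i j hi.1 h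
    · exact (key j i hj.1 h).symm
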